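/- Let G=(V,E) be a connected finite weighted graph, z_1,…,z_k distinct vertices, n_1,…,n_k positive integers, N = n_1 + ⋯ + n_k, and δ_{z_s}(x) = 1/μ(z_s) if x = z_s and 0 otherwise. Then the Bogomol'nyi equation Δu = e^u − 1 + 4π Σ_{s=1}^k n_s δ_{z_s} on V admits a (unique) solution if and only if 4πN < |V|, where |V| = Σ_{x∈V} μ(x). -/

import Mathlib

open Finset Real Filter Topology

variable {V : Type*}

/-- Graph Laplacian: Δu(x) = (1/μ x) Σ_y w x y (u y - u x). -/
noncomputable def lap [Fintype V] (w : V → V → ℝ) (μ : V → ℝ) (u : V → ℝ) (x : V) : ℝ :=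
  (1 / μ x) * ∑ y, w x y * (u y - u x)

/-- Gradient form Γ(u,v)(x). -/
noncomputable def gam [Fintype V] (w : V → V → ℝ) (μ : V → ℝ) (u v : V → ℝ) (x : V) : ℝ :=
  (1 / (2 * μ x)) * ∑ y, w x y * (u y - u x) * (v y - v x)

/-- Integral over V: ∫_V f dμ = Σ_x μ x * f x. -/
noncomputable def intV [Fintype V] (μ : V → ℝ) (f : V → ℝ) : ℝ := ∑ x, μ x * f x

/-- Dirac mass at z. -/
noncomputable def dirac [DecidableEq V] (μ : V → ℝ) (z : V) (x : V) : ℝ :=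
  if x = z then 1 / μ z else 0

noncomputable def Qen [Fintype V] (w : V → V → ℝ) (u : V → ℝ) : ℝ :=
  ∑ x, ∑ y, w x y * (u y - u x) ^ 2

noncomputable def Jen [Fintype V] (w : V → V → ℝ) (μ b : V → ℝ) (u : V → ℝ) : ℝ :=
  (1/4) * Qen w u + ∑ x, μ x * Real.exp (u x) - ∑ x, b x * u x

section Aux
variable [Fintype V]

lemma green (w : V → V → ℝ) (hsym : ∀ x y, w x y = w y x) (φ u : V → ℝ) :
    ∑ x, ∑ y, w x y * (φ y - φ x) * (u y - u x)
      = 2 * ∑ x, φ x * ∑ y, w x y * (u x - u y) := by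
  have h1 : ∑ x, ∑ y, w x y * (φ y - φ x) * (u y - u x)
      = ∑ x, ∑ y, (w x y * φ y * (u y - u x) - w x y * φ x * (u y - u x)) := by
    refine sum_congr rfl fun x _ => sum_congr rfl fun y _ => by ring
  have h2 : ∑ x, ∑ y, w x y * φ y * (u y - u x)
      = ∑ x, ∑ y, w x y * φ x * (u x - u y) := by
    rw [Finset.sum_comm]
    refine sum_congr rfl fun x _ => sum_congr rfl fun y _ => by rw [hsym y x]
  have h3 : ∑ x, ∑ y, w x y * φ x * (u y - u x)
      = - ∑ x, ∑ y, w x y * φ x * (u x - u y) := by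
    rw [← Finset.sum_neg_distrib]
    refine sum_congr rfl fun x _ => ?_
    rw [← Finset.sum_neg_distrib]
    refine sum_congr rfl fun y _ => by ring
  rw [h1]
  simp only [Finset.sum_sub_distrib]
  rw [h2, h3]
  rw [show (2:ℝ) * ∑ x, φ x * ∑ y, w x y * (u x - u y)
      = 2 * ∑ x, ∑ y, w x y * φ x * (u x - u y) by
    rw [mul_right_inj' (two_ne_zero)]
    exact sum_congr rfl fun x _ => by rw [Finset.mul_sum]; exact sum_congr rfl fun y _ => by ring]
  ring

lemma mu_lap (w : V → V → ℝ) (μ : V → ℝ) (hμ : ∀ x, 0 < μ x) (u : V → ℝ) (x : V) :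
    μ x * lap w μ u x = ∑ y, w x y * (u y - u x) := by
  unfold lap
  rw [← mul_assoc, mul_one_div, div_self (hμ x).ne', one_mul]

lemma lap_integral (w : V → V → ℝ) (μ : V → ℝ) (hsym : ∀ x y, w x y = w y x)
    (hμ : ∀ x, 0 < μ x) (u : V → ℝ) :
    ∑ x, μ x * lap w μ u x = 0 := by
  have h := green w hsym u u
  have h2 : ∑ x, μ x * lap w μ u x = ∑ x, ∑ y, w x y * (u y - u x) := by
    exact sum_congr rfl fun x _ => mu_lap w μ hμ u x
  rw [h2]
  -- swap trick
  have h3 : ∑ x, ∑ y, w x y * (u y - u x) = ∑ x, ∑ y, w x y * (u x - u y) := by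
    rw [Finset.sum_comm]
    exact sum_congr rfl fun x _ => sum_congr rfl fun y _ => by rw [hsym y x]
  have h4 : ∑ x, ∑ y, w x y * (u x - u y) = - ∑ x, ∑ y, w x y * (u y - u x) := by
    rw [← Finset.sum_neg_distrib]
    refine sum_congr rfl fun x _ => ?_
    rw [← Finset.sum_neg_distrib]
    exact sum_congr rfl fun y _ => by ring
  linarith [h3, h4, h3 ▸ h4]


lemma necessity (w : V → V → ℝ) (μ b : V → ℝ) (hsym : ∀ x y, w x y = w y x)
    (hμ : ∀ x, 0 < μ x) [Nonempty V] (u : V → ℝ)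
    (hu : ∀ x, lap w μ u x = Real.exp (u x) - b x / μ x) :
    0 < ∑ x, b x := by
  have h0 := lap_integral w μ hsym hμ u
  have h1 : ∑ x, μ x * lap w μ u x = ∑ x, μ x * Real.exp (u x) - ∑ x, b x := by
    rw [← Finset.sum_sub_distrib]
    refine sum_congr rfl fun x _ => ?_
    rw [hu x, mul_sub, mul_comm (μ x) (b x / μ x), div_mul_cancel₀ _ (hμ x).ne']
  have h2 : 0 < ∑ x, μ x * Real.exp (u x) :=
    Finset.sum_pos (fun x _ => mul_pos (hμ x) (Real.exp_pos _)) univ_nonempty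
  linarith

lemma uniqueness (w : V → V → ℝ) (μ b : V → ℝ) (hsym : ∀ x y, w x y = w y x)
    (hnn : ∀ x y, 0 ≤ w x y) (hμ : ∀ x, 0 < μ x) (u₁ u₂ : V → ℝ)
    (h₁ : ∀ x, lap w μ u₁ x = Real.exp (u₁ x) - b x / μ x)
    (h₂ : ∀ x, lap w μ u₂ x = Real.exp (u₂ x) - b x / μ x) : u₁ = u₂ := by
  set v : V → ℝ := fun x => u₁ x - u₂ x with hvdef
  have hv : ∀ x, v x = u₁ x - u₂ x := fun x => rfl
  have key : ∀ x, ∑ y, w x y * (v y - v x) = μ x * (Real.exp (u₁ x) - Real.exp (u₂ x)) := by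
    intro x
    have e1 := mu_lap w μ hμ u₁ x
    have e2 := mu_lap w μ hμ u₂ x
    have e3 : ∑ y, w x y * (v y - v x)
        = ∑ y, w x y * (u₁ y - u₁ x) - ∑ y, w x y * (u₂ y - u₂ x) := by
      rw [← Finset.sum_sub_distrib]
      exact sum_congr rfl fun y _ => by rw [hv y, hv x]; ring
    rw [e3, ← e1, ← e2, h₁ x, h₂ x]
    ring
  have hg := green w hsym v v
  have hQ : Qen w v = 2 * ∑ x, v x * ∑ y, w x y * (v x - v y) := by
    rw [← hg]
    exact sum_congr rfl fun x _ => sum_congr rfl fun y _ => by ring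
  have hterm : ∀ x, ∑ y, w x y * (v x - v y) = - (μ x * (Real.exp (u₁ x) - Real.exp (u₂ x))) := by
    intro x
    rw [← key x, ← Finset.sum_neg_distrib]
    exact sum_congr rfl fun y _ => by ring
  have hs : ∀ x, v x * ∑ y, w x y * (v x - v y)
      = -(μ x * (v x * (Real.exp (u₁ x) - Real.exp (u₂ x)))) := fun x => by
    rw [hterm x]; ring
  have hQ2 : Qen w v = - 2 * ∑ x, μ x * (v x * (Real.exp (u₁ x) - Real.exp (u₂ x))) := by
    rw [hQ, sum_congr rfl (fun x _ => hs x), Finset.sum_neg_distrib]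
    ring
  have hnneg : ∀ x ∈ Finset.univ (α := V), 0 ≤ μ x * (v x * (Real.exp (u₁ x) - Real.exp (u₂ x))) := by
    intro x _
    refine mul_nonneg (hμ x).le ?_
    rcases lt_trichotomy (u₁ x) (u₂ x) with h | h | h
    · have h1 := Real.exp_lt_exp.2 h
      have h2 : v x ≤ 0 := by rw [hv x]; linarith
      nlinarith
    · simp [hv x, h]
    · have h1 := Real.exp_lt_exp.2 h
      have h2 : (0:ℝ) ≤ v x := by rw [hv x]; linarith
      nlinarith
  have hQnn : 0 ≤ Qen w v :=
    Finset.sum_nonneg fun x _ => Finset.sum_nonneg fun y _ =>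
      mul_nonneg (hnn x y) (sq_nonneg _)
  have hsum0 : ∑ x, μ x * (v x * (Real.exp (u₁ x) - Real.exp (u₂ x))) = 0 := by
    have hle : ∑ x, μ x * (v x * (Real.exp (u₁ x) - Real.exp (u₂ x))) ≤ 0 := by nlinarith [hQ2, hQnn]
    have hge : 0 ≤ ∑ x, μ x * (v x * (Real.exp (u₁ x) - Real.exp (u₂ x))) :=
      Finset.sum_nonneg hnneg
    linarith
  have hzero := (Finset.sum_eq_zero_iff_of_nonneg hnneg).1 hsum0
  funext x
  have hx := hzero x (mem_univ x)
  by_contra hne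
  rcases lt_or_gt_of_ne hne with h | h
  · have h1 := Real.exp_lt_exp.2 h
    have h2 : v x < 0 := by rw [hv x]; linarith
    have hp : 0 < μ x * (v x * (Real.exp (u₁ x) - Real.exp (u₂ x))) :=
      mul_pos (hμ x) (mul_pos_of_neg_of_neg h2 (by linarith))
    linarith
  · have h1 := Real.exp_lt_exp.2 h
    have h2 : 0 < v x := by rw [hv x]; linarith
    have hp : 0 < μ x * (v x * (Real.exp (u₁ x) - Real.exp (u₂ x))) :=
      mul_pos (hμ x) (mul_pos h2 (by linarith))
    linarith


lemma rigidity (w : V → V → ℝ) (hsym : ∀ x y, w x y = w y x) (hnn : ∀ x y, 0 ≤ w x y)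
    (hconn : (SimpleGraph.fromRel fun x y => 0 < w x y).Connected)
    (u : V → ℝ) (hQ : Qen w u = 0) : ∀ x y, u x = u y := by
  have hterm : ∀ x y, w x y * (u y - u x) ^ 2 = 0 := by
    intro x y
    have h1 : ∀ x ∈ Finset.univ (α := V), (0:ℝ) ≤ ∑ y, w x y * (u y - u x) ^ 2 :=
      fun x _ => Finset.sum_nonneg fun y _ => mul_nonneg (hnn x y) (sq_nonneg _)
    have h2 := (Finset.sum_eq_zero_iff_of_nonneg h1).1 hQ x (mem_univ x)
    exact (Finset.sum_eq_zero_iff_of_nonneg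
      (fun y _ => mul_nonneg (hnn x y) (sq_nonneg _))).1 h2 y (mem_univ y)
  have hadj : ∀ x y, (SimpleGraph.fromRel fun x y => 0 < w x y).Adj x y → u x = u y := by
    intro x y hxy
    rw [SimpleGraph.fromRel_adj] at hxy
    have hw : 0 < w x y := by
      rcases hxy.2 with h | h
      · exact h
      · rw [hsym]; exact h
    have := hterm x y
    have h3 : (u y - u x) ^ 2 = 0 := by
      rcases mul_eq_zero.1 this with h | h
      · exact absurd h hw.ne'
      · exact h
    have := sq_eq_zero_iff.1 h3
    linarith
  intro x y
  obtain ⟨p⟩ := hconn.preconnected x y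
  induction p with
  | nil => rfl
  | cons h p ih => exact (hadj _ _ h).trans ih

lemma Qen_nonneg (w : V → V → ℝ) (hnn : ∀ x y, 0 ≤ w x y) (u : V → ℝ) : 0 ≤ Qen w u :=
  Finset.sum_nonneg fun x _ => Finset.sum_nonneg fun y _ => mul_nonneg (hnn x y) (sq_nonneg _)

lemma Qen_smul (w : V → V → ℝ) (c : ℝ) (u : V → ℝ) :
    Qen w (fun x => c * u x) = c ^ 2 * Qen w u := by
  unfold Qen
  rw [Finset.mul_sum]
  refine sum_congr rfl fun x _ => ?_
  rw [Finset.mul_sum]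
  exact sum_congr rfl fun y _ => by ring

lemma poincare (w : V → V → ℝ) (μ : V → ℝ) (hsym : ∀ x y, w x y = w y x)
    (hnn : ∀ x y, 0 ≤ w x y) (hμ : ∀ x, 0 < μ x)
    (hconn : (SimpleGraph.fromRel fun x y => 0 < w x y).Connected) :
    ∃ lam > 0, ∀ u : V → ℝ, ∑ x, μ x * u x = 0 →
      lam * ∑ x, μ x * u x ^ 2 ≤ Qen w u := by
  have : Nonempty V := hconn.nonempty
  set K : Set (V → ℝ) := {u | ∑ x, μ x * u x = 0 ∧ ∑ x, μ x * u x ^ 2 = 1} with hK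
  have hnorm : ∀ u : V → ℝ, 0 ≤ ∑ x, μ x * u x ^ 2 :=
    fun u => Finset.sum_nonneg fun x _ => mul_nonneg (hμ x).le (sq_nonneg _)
  have hscale : ∀ u : V → ℝ, ∑ x, μ x * u x = 0 → ∑ x, μ x * u x ^ 2 ≠ 0 →
      (fun x => (Real.sqrt (∑ x, μ x * u x ^ 2))⁻¹ * u x) ∈ K := by
    intro u hm hs
    have hpos : 0 < ∑ x, μ x * u x ^ 2 := lt_of_le_of_ne (hnorm u) (Ne.symm hs)
    have hsq : Real.sqrt (∑ x, μ x * u x ^ 2) ^ 2 = ∑ x, μ x * u x ^ 2 :=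
      Real.sq_sqrt (hnorm u)
    have hsqpos : 0 < Real.sqrt (∑ x, μ x * u x ^ 2) := Real.sqrt_pos.2 hpos
    constructor
    · have : ∑ x, μ x * ((Real.sqrt (∑ x, μ x * u x ^ 2))⁻¹ * u x)
          = (Real.sqrt (∑ x, μ x * u x ^ 2))⁻¹ * ∑ x, μ x * u x := by
        rw [Finset.mul_sum]; exact sum_congr rfl fun x _ => by ring
      rw [this, hm, mul_zero]
    · have : ∑ x, μ x * ((Real.sqrt (∑ x, μ x * u x ^ 2))⁻¹ * u x) ^ 2
          = ((Real.sqrt (∑ x, μ x * u x ^ 2))⁻¹) ^ 2 * ∑ x, μ x * u x ^ 2 := by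
        rw [Finset.mul_sum]; exact sum_congr rfl fun x _ => by ring
      rw [this, inv_pow, hsq, inv_mul_cancel₀ hpos.ne']
  by_cases hKne : K.Nonempty
  · -- compactness
    have hclosed : IsClosed K := by
      have c1 : Continuous (fun u : V → ℝ => ∑ x, μ x * u x) := by
        exact continuous_finset_sum _ fun x _ => continuous_const.mul (continuous_apply x)
      have c2 : Continuous (fun u : V → ℝ => ∑ x, μ x * u x ^ 2) := by
        exact continuous_finset_sum _ fun x _ => continuous_const.mul ((continuous_apply x).pow 2)
      exact (isClosed_eq c1 continuous_const).inter (isClosed_eq c2 continuous_const)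
    have hbdd : Bornology.IsBounded K := by
      rw [Metric.isBounded_iff_subset_closedBall 0]
      refine ⟨Real.sqrt (∑ x, (μ x)⁻¹), fun u hu => ?_⟩
      rw [Metric.mem_closedBall, dist_zero_right]
      have hbound : ∀ x, ‖u x‖ ≤ Real.sqrt (∑ x, (μ x)⁻¹) := by
        intro x
        have h1 : μ x * u x ^ 2 ≤ 1 := by
          rw [← hu.2]
          exact Finset.single_le_sum (f := fun x => μ x * u x ^ 2)
            (fun y _ => mul_nonneg (hμ y).le (sq_nonneg _)) (mem_univ x)
        have h2 : u x ^ 2 ≤ (μ x)⁻¹ := by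
          rw [inv_eq_one_div, le_div_iff₀ (hμ x)]
          nlinarith [hμ x]
        have h3 : (μ x)⁻¹ ≤ ∑ x, (μ x)⁻¹ :=
          Finset.single_le_sum (f := fun x => (μ x)⁻¹)
            (fun y _ => (inv_pos.2 (hμ y)).le) (mem_univ x)
        rw [Real.norm_eq_abs, ← Real.sqrt_sq_eq_abs]
        exact Real.sqrt_le_sqrt (by linarith)
      exact pi_norm_le_iff_of_nonneg (Real.sqrt_nonneg _) |>.2 hbound
    have hcomp : IsCompact K := Metric.isCompact_of_isClosed_isBounded hclosed hbdd
    have hQcont : Continuous (Qen w) := by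
      unfold Qen
      exact continuous_finset_sum _ fun x _ => continuous_finset_sum _ fun y _ =>
        continuous_const.mul (((continuous_apply y).sub (continuous_apply x)).pow 2)
    obtain ⟨u₀, hu₀K, hu₀min⟩ := hcomp.exists_isMinOn hKne hQcont.continuousOn
    refine ⟨Qen w u₀, ?_, ?_⟩
    · rcases lt_or_eq_of_le (Qen_nonneg w hnn u₀) with h | h
      · exact h
      · exfalso
        have hconst := rigidity w hsym hnn hconn u₀ h.symm
        obtain ⟨x₀⟩ := ‹Nonempty V›
        have hcval : ∀ x, u₀ x = u₀ x₀ := fun x => hconst x x₀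
        have hm := hu₀K.1
        have : ∑ x, μ x * u₀ x = (∑ x, μ x) * u₀ x₀ := by
          rw [Finset.sum_mul]; exact sum_congr rfl fun x _ => by rw [hcval x]
        have hvol : 0 < ∑ x, μ x := Finset.sum_pos (fun x _ => hμ x) univ_nonempty
        have hz : u₀ x₀ = 0 := by
          rw [this] at hm
          rcases mul_eq_zero.1 hm with h' | h'
          · exact absurd h' hvol.ne'
          · exact h'
        have : ∑ x, μ x * u₀ x ^ 2 = 0 :=
          Finset.sum_eq_zero fun x _ => by rw [hcval x, hz]; ring
        rw [hu₀K.2] at this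
        norm_num at this
    · intro u hm
      by_cases hs : ∑ x, μ x * u x ^ 2 = 0
      · rw [hs, mul_zero]; exact Qen_nonneg w hnn u
      · have hmem := hscale u hm hs
        have hle := hu₀min hmem
        have hpos : 0 < ∑ x, μ x * u x ^ 2 := lt_of_le_of_ne (hnorm u) (Ne.symm hs)
        have hsqpos : 0 < Real.sqrt (∑ x, μ x * u x ^ 2) := Real.sqrt_pos.2 hpos
        have hQs := Qen_smul w (Real.sqrt (∑ x, μ x * u x ^ 2))⁻¹ u
        have hsq : Real.sqrt (∑ x, μ x * u x ^ 2) ^ 2 = ∑ x, μ x * u x ^ 2 :=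
          Real.sq_sqrt (hnorm u)
        have : Qen w u₀ ≤ (Real.sqrt (∑ x, μ x * u x ^ 2))⁻¹ ^ 2 * Qen w u := by
          rw [← hQs]; exact hle
        rw [inv_pow, hsq] at this
        calc Qen w u₀ * ∑ x, μ x * u x ^ 2
            ≤ ((∑ x, μ x * u x ^ 2)⁻¹ * Qen w u) * ∑ x, μ x * u x ^ 2 := by
              exact mul_le_mul_of_nonneg_right this (hnorm u)
          _ = Qen w u := by field_simp
  · refine ⟨1, one_pos, fun u hm => ?_⟩
    by_cases hs : ∑ x, μ x * u x ^ 2 = 0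
    · rw [hs, mul_zero]; exact Qen_nonneg w hnn u
    · exact absurd ⟨_, hscale u hm hs⟩ hKne


lemma absorb1 {lam s S Bc : ℝ} (hlam : 0 < lam) (hs2 : s ^ 2 = S) :
    Bc * s ≤ lam / 8 * S + 2 * Bc ^ 2 / lam := by
  have hcc : lam * (2 * Bc ^ 2 / lam) = 2 * Bc ^ 2 := by field_simp
  rw [← mul_le_mul_iff_right₀ hlam, mul_add, hcc, ← hs2]
  nlinarith [sq_nonneg (lam * s - 4 * Bc)]

lemma absorb2 {vol β a : ℝ} (hvol : 0 < vol) (hβ : 0 < β) :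
    β / 2 * |a| - 9 * β ^ 2 / (4 * vol) ≤ vol * Real.exp a - a * β := by
  rcases le_or_gt a 0 with ha | ha
  · rw [abs_of_nonpos ha]
    have h1 : 0 < Real.exp a := Real.exp_pos a
    have h2 : 0 ≤ 9 * β ^ 2 / (4 * vol) := by positivity
    nlinarith
  · rw [abs_of_pos ha]
    have h1 : Real.exp a = Real.exp (a/2) * Real.exp (a/2) := by
      rw [← Real.exp_add]; ring_nf
    have h2 : a / 2 + 1 ≤ Real.exp (a/2) := by
      have := Real.add_one_le_exp (a/2); linarith
    have h3 : vol * a ^ 2 / 4 ≤ vol * Real.exp a := by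
      have h4 : a ^ 2 / 4 ≤ Real.exp a := by nlinarith
      nlinarith
    have hcc : vol * (9 * β ^ 2 / (4 * vol)) = 9 * β ^ 2 / 4 := by
      field_simp
    nlinarith [sq_nonneg (vol * a - 3 * β), hvol]

lemma Jen_continuous (w : V → V → ℝ) (μ b : V → ℝ) : Continuous (Jen w μ b) := by
  unfold Jen Qen
  refine Continuous.sub (Continuous.add ?_ ?_) ?_
  · exact continuous_const.mul (continuous_finset_sum _ fun x _ =>
      continuous_finset_sum _ fun y _ =>
        continuous_const.mul (((continuous_apply y).sub (continuous_apply x)).pow 2))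
  · exact continuous_finset_sum _ fun x _ =>
      continuous_const.mul (Real.continuous_exp.comp (continuous_apply x))
  · exact continuous_finset_sum _ fun x _ => continuous_const.mul (continuous_apply x)

lemma exists_min (w : V → V → ℝ) (μ b : V → ℝ) (hsym : ∀ x y, w x y = w y x)
    (hnn : ∀ x y, 0 ≤ w x y) (hμ : ∀ x, 0 < μ x)
    (hconn : (SimpleGraph.fromRel fun x y => 0 < w x y).Connected)
    (hb : 0 < ∑ x, b x) :
    ∃ u : V → ℝ, ∀ v, Jen w μ b u ≤ Jen w μ b v := by
  have : Nonempty V := hconn.nonempty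
  obtain ⟨lam, hlam, hpoin⟩ := poincare w μ hsym hnn hμ hconn
  set vol : ℝ := ∑ x, μ x with hvol_def
  have hvol : 0 < vol := Finset.sum_pos (fun x _ => hμ x) univ_nonempty
  set β : ℝ := ∑ x, b x with hβ_def
  have hβ : 0 < β := hb
  set T : ℝ := ∑ x, (μ x)⁻¹ with hT_def
  have hT : 0 < T := Finset.sum_pos (fun x _ => inv_pos.2 (hμ x)) univ_nonempty
  set Bc : ℝ := (∑ x, |b x|) * Real.sqrt T with hBc_def
  have hBc : 0 ≤ Bc :=
    mul_nonneg (Finset.sum_nonneg fun x _ => abs_nonneg _) (Real.sqrt_nonneg _)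
  set c₂ : ℝ := 2 * Bc ^ 2 / lam + 9 * β ^ 2 / (4 * vol) with hc₂_def
  have hc₂ : 0 ≤ c₂ := by positivity
  -- key coercivity estimate
  have key : ∀ u : V → ℝ, ∃ a S : ℝ, 0 ≤ S ∧
      (∀ x, |u x| ≤ |a| + Real.sqrt (S * T)) ∧
      lam / 8 * S + β / 2 * |a| - c₂ ≤ Jen w μ b u := by
    intro u
    set a : ℝ := (∑ x, μ x * u x) / vol with ha_def
    set v : V → ℝ := fun x => u x - a with hv_def
    have hv : ∀ x, v x = u x - a := fun _ => rfl
    set S : ℝ := ∑ x, μ x * v x ^ 2 with hS_def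
    have hS0 : 0 ≤ S := Finset.sum_nonneg fun x _ => mul_nonneg (hμ x).le (sq_nonneg _)
    set s : ℝ := Real.sqrt S with hs_def
    have hs0 : 0 ≤ s := Real.sqrt_nonneg _
    have hs2 : s ^ 2 = S := Real.sq_sqrt hS0
    have hmean : ∑ x, μ x * v x = 0 := by
      have h1 : ∑ x, μ x * v x = ∑ x, μ x * u x - a * vol :=
        calc ∑ x, μ x * v x = ∑ x, (μ x * u x - μ x * a) :=
              sum_congr rfl fun x _ => by rw [hv x]; ring
          _ = ∑ x, μ x * u x - ∑ x, μ x * a := Finset.sum_sub_distrib _ _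
          _ = ∑ x, μ x * u x - a * vol := by
              rw [hvol_def, ← Finset.sum_mul]; ring
      rw [h1, ha_def, div_mul_cancel₀ _ hvol.ne', sub_self]
    refine ⟨a, S, hS0, ?_, ?_⟩
    · -- sup bound
      intro x
      have h1 : μ x * v x ^ 2 ≤ S :=
        Finset.single_le_sum (f := fun x => μ x * v x ^ 2)
          (fun y _ => mul_nonneg (hμ y).le (sq_nonneg _)) (mem_univ x)
      have h3 : v x ^ 2 ≤ S * (μ x)⁻¹ := by
        rw [mul_comm, inv_eq_one_div, div_mul_eq_mul_div, le_div_iff₀ (hμ x)]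
        nlinarith [hμ x]
      have h4 : (μ x)⁻¹ ≤ T := Finset.single_le_sum (f := fun y => (μ y)⁻¹)
        (fun y _ => (inv_pos.2 (hμ y)).le) (mem_univ x)
      have h2 : v x ^ 2 ≤ S * T := h3.trans (mul_le_mul_of_nonneg_left h4 hS0)
      have h5 : |v x| ≤ Real.sqrt (S * T) := by
        rw [← Real.sqrt_sq_eq_abs]
        exact Real.sqrt_le_sqrt h2
      have h6 : |u x| ≤ |a| + |v x| := by
        have : u x = a + v x := by rw [hv x]; ring
        rw [this]
        exact abs_add_le _ _
      linarith
    · -- coercivity estimate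
      have hQ : Qen w u = Qen w v := by
        unfold Qen
        refine sum_congr rfl fun x _ => sum_congr rfl fun y _ => ?_
        rw [hv x, hv y]; ring
      have hpv : lam * S ≤ Qen w v := hpoin v hmean
      -- exponential bound
      have hexp : vol * Real.exp a ≤ ∑ x, μ x * Real.exp (u x) := by
        have h1 : ∀ x ∈ Finset.univ (α := V),
            μ x * Real.exp a * (1 + v x) ≤ μ x * Real.exp (u x) := by
          intro x _
          have hux : u x = a + v x := by rw [hv x]; ring
          rw [hux, Real.exp_add, ← mul_assoc]
          have h2 : 1 + v x ≤ Real.exp (v x) := by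
            have := Real.add_one_le_exp (v x); linarith
          exact mul_le_mul_of_nonneg_left h2 (mul_pos (hμ x) (Real.exp_pos a)).le
        have h3 : ∑ x, μ x * Real.exp a * (1 + v x) = vol * Real.exp a := by
          have : ∀ x, μ x * Real.exp a * (1 + v x)
              = Real.exp a * μ x + Real.exp a * (μ x * v x) := fun x => by ring
          rw [sum_congr rfl fun x _ => this x, Finset.sum_add_distrib,
            ← Finset.mul_sum, ← Finset.mul_sum, hmean, mul_zero, add_zero,
            hvol_def]
          ring
        calc vol * Real.exp a = ∑ x, μ x * Real.exp a * (1 + v x) := h3.symm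
          _ ≤ ∑ x, μ x * Real.exp (u x) := Finset.sum_le_sum h1
      -- linear term split
      have hlin : ∑ x, b x * u x = a * β + ∑ x, b x * v x := by
        have : ∀ x, b x * u x = b x * a + b x * v x := fun x => by rw [hv x]; ring
        rw [sum_congr rfl fun x _ => this x, Finset.sum_add_distrib, hβ_def,
          ← Finset.sum_mul]
        ring
      -- bound on linear remainder
      have hbv : |∑ x, b x * v x| ≤ Bc * s := by
        calc |∑ x, b x * v x| ≤ ∑ x, |b x * v x| := Finset.abs_sum_le_sum_abs _ _
          _ = ∑ x, |b x| * |v x| := sum_congr rfl fun x _ => abs_mul _ _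
          _ ≤ ∑ x, |b x| * Real.sqrt (S * T) := by
              refine Finset.sum_le_sum fun x _ => ?_
              refine mul_le_mul_of_nonneg_left ?_ (abs_nonneg _)
              have h1 : μ x * v x ^ 2 ≤ S :=
                Finset.single_le_sum (f := fun x => μ x * v x ^ 2)
                  (fun y _ => mul_nonneg (hμ y).le (sq_nonneg _)) (mem_univ x)
              have h3 : v x ^ 2 ≤ S * (μ x)⁻¹ := by
                rw [mul_comm, inv_eq_one_div, div_mul_eq_mul_div, le_div_iff₀ (hμ x)]
                nlinarith [hμ x]
              have h4 : (μ x)⁻¹ ≤ T := Finset.single_le_sum (f := fun y => (μ y)⁻¹)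
                (fun y _ => (inv_pos.2 (hμ y)).le) (mem_univ x)
              have h2 : v x ^ 2 ≤ S * T := h3.trans (mul_le_mul_of_nonneg_left h4 hS0)
              calc |v x| = Real.sqrt (v x ^ 2) := (Real.sqrt_sq_eq_abs _).symm
                _ ≤ Real.sqrt (S * T) := Real.sqrt_le_sqrt h2
          _ = Bc * s := by
              rw [← Finset.sum_mul, Real.sqrt_mul hS0, hBc_def, hs_def]
              ring
      -- assemble
      have hJ : lam / 4 * S + vol * Real.exp a - a * β - Bc * s ≤ Jen w μ b u := by
        unfold Jen
        rw [hQ, hlin]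
        have h1 : lam / 4 * S ≤ 1/4 * Qen w v := by linarith
        have h2 : -(Bc * s) ≤ - ∑ x, b x * v x := by
          have := le_abs_self (∑ x, b x * v x)
          linarith
        linarith
      -- quadratic absorption
      have q1 : Bc * s ≤ lam / 8 * S + 2 * Bc ^ 2 / lam := absorb1 hlam hs2
      have q2 : β / 2 * |a| - 9 * β ^ 2 / (4 * vol) ≤ vol * Real.exp a - a * β :=
        absorb2 hvol hβ
      rw [hc₂_def]
      linarith
  -- now extract the minimizer
  clear_value vol β T Bc c₂
  have hJcont := Jen_continuous w μ b
  set J0 : ℝ := Jen w μ b 0 with hJ0_def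
  clear_value J0
  have hJ0c : 0 ≤ J0 + c₂ := by
    obtain ⟨a, S, hS0, _, hkey⟩ := key 0
    have : 0 ≤ lam / 8 * S + β / 2 * |a| := by positivity
    linarith
  set R : ℝ := 2 * (J0 + c₂) / β + Real.sqrt (8 * (J0 + c₂) / lam * T) with hR_def
  clear_value R
  have hcoer : ∀ u : V → ℝ, R < ‖u‖ → J0 ≤ Jen w μ b u := by
    intro u hu
    by_contra hlt
    push_neg at hlt
    obtain ⟨a, S, hS0, hsup, hkey⟩ := key u
    have hS1 : lam / 8 * S ≤ J0 + c₂ := by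
      have : 0 ≤ β / 2 * |a| := by positivity
      linarith
    have hA1 : β / 2 * |a| ≤ J0 + c₂ := by
      have : 0 ≤ lam / 8 * S := by positivity
      linarith
    have hSle : S ≤ 8 * (J0 + c₂) / lam := by
      rw [le_div_iff₀ hlam]; linarith
    have hAle : |a| ≤ 2 * (J0 + c₂) / β := by
      rw [le_div_iff₀ hβ]; linarith
    have hST : Real.sqrt (S * T) ≤ Real.sqrt (8 * (J0 + c₂) / lam * T) := by
      apply Real.sqrt_le_sqrt
      exact mul_le_mul_of_nonneg_right hSle hT.le
    have hnormle : ‖u‖ ≤ R := by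
      refine pi_norm_le_iff_of_nonneg ?_ |>.2 fun x => ?_
      · have : 0 ≤ |a| := abs_nonneg a
        have := Real.sqrt_nonneg (8 * (J0 + c₂) / lam * T)
        rw [hR_def]
        have h0 : 0 ≤ 2 * (J0 + c₂) / β := by positivity
        linarith
      · rw [Real.norm_eq_abs]
        calc |u x| ≤ |a| + Real.sqrt (S * T) := hsup x
          _ ≤ 2 * (J0 + c₂) / β + Real.sqrt (8 * (J0 + c₂) / lam * T) := by
              linarith
          _ = R := hR_def.symm
    linarith
  have hev : ∀ᶠ u in cocompact (V → ℝ), Jen w μ b 0 ≤ Jen w μ b u := by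
    have htt : Tendsto (fun u : V → ℝ => ‖u‖) (cocompact (V → ℝ)) atTop :=
      tendsto_norm_cocompact_atTop
    exact (htt.eventually_gt_atTop R).mono fun u hu => hJ0_def ▸ hcoer u hu
  obtain ⟨u, hu⟩ := hJcont.exists_forall_le' 0 hev
  exact ⟨u, hu⟩


lemma critical [DecidableEq V] (w : V → V → ℝ) (μ b : V → ℝ)
    (hsym : ∀ x y, w x y = w y x) (hμ : ∀ x, 0 < μ x) (u : V → ℝ)
    (hmin : ∀ v, Jen w μ b u ≤ Jen w μ b v) :
    ∀ x, lap w μ u x = Real.exp (u x) - b x / μ x := by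
  intro x₀
  set e : V → ℝ := fun y => if y = x₀ then 1 else 0 with he_def
  have he : ∀ y, e y = if y = x₀ then 1 else 0 := fun _ => rfl
  set ψ : ℝ → ℝ := fun t => Jen w μ b (fun y => u y + t * e y) with hψ_def
  have hloc : IsLocalMin ψ 0 := by
    apply Filter.Eventually.of_forall
    intro t
    have h0 : ψ 0 = Jen w μ b u := by
      rw [hψ_def]
      simp only []
      congr 1
      funext y
      ring
    rw [h0]
    exact hmin _
  have hinner : ∀ x y : V, HasDerivAt (fun t : ℝ => (u y + t * e y) - (u x + t * e x))
      (e y - e x) 0 := by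
    intro x y
    have h1 : HasDerivAt (fun t : ℝ => u y + t * e y) (e y) 0 := by
      simpa using ((hasDerivAt_id (0:ℝ)).mul_const (e y)).const_add (u y)
    have h2 : HasDerivAt (fun t : ℝ => u x + t * e x) (e x) 0 := by
      simpa using ((hasDerivAt_id (0:ℝ)).mul_const (e x)).const_add (u x)
    exact h1.sub h2
  have hsq : ∀ x y : V, HasDerivAt
      (fun t : ℝ => w x y * ((u y + t * e y) - (u x + t * e x)) ^ 2)
      (w x y * (2 * (u y - u x) * (e y - e x))) 0 := by
    intro x y
    have h := ((hinner x y).pow 2).const_mul (w x y)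
    exact h.congr_deriv (by simp)
  have hA : HasDerivAt (fun t : ℝ => Qen w (fun y => u y + t * e y))
      (∑ x, ∑ y, w x y * (2 * (u y - u x) * (e y - e x))) 0 := by
    unfold Qen
    exact HasDerivAt.fun_sum fun x _ => HasDerivAt.fun_sum fun y _ => hsq x y
  have hB : HasDerivAt (fun t : ℝ => ∑ x, μ x * Real.exp (u x + t * e x))
      (∑ x, μ x * (Real.exp (u x) * e x)) 0 := by
    refine HasDerivAt.fun_sum fun x _ => ?_
    have h1 : HasDerivAt (fun t : ℝ => u x + t * e x) (e x) 0 := by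
      simpa using ((hasDerivAt_id (0:ℝ)).mul_const (e x)).const_add (u x)
    have h2 := (h1.exp).const_mul (μ x)
    simpa using h2
  have hC : HasDerivAt (fun t : ℝ => ∑ x, b x * (u x + t * e x)) (∑ x, b x * e x) 0 := by
    refine HasDerivAt.fun_sum fun x _ => ?_
    have h1 : HasDerivAt (fun t : ℝ => u x + t * e x) (e x) 0 := by
      simpa using ((hasDerivAt_id (0:ℝ)).mul_const (e x)).const_add (u x)
    exact h1.const_mul (b x)
  have hψ : HasDerivAt ψ
      (1/4 * ∑ x, ∑ y, w x y * (2 * (u y - u x) * (e y - e x))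
        + ∑ x, μ x * (Real.exp (u x) * e x) - ∑ x, b x * e x) 0 := by
    rw [hψ_def]
    unfold Jen
    exact ((hA.const_mul (1/4)).add hB).sub hC
  have hval : 1/4 * ∑ x, ∑ y, w x y * (2 * (u y - u x) * (e y - e x))
      + ∑ x, μ x * (Real.exp (u x) * e x) - ∑ x, b x * e x = 0 := by
    rw [← hψ.deriv]
    exact hloc.deriv_eq_zero
  -- simplify the three sums
  have hgr : ∑ x, ∑ y, w x y * (2 * (u y - u x) * (e y - e x))
      = 4 * ∑ y, w x₀ y * (u x₀ - u y) := by
    have h1 : ∑ x, ∑ y, w x y * (2 * (u y - u x) * (e y - e x))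
        = 2 * ∑ x, ∑ y, w x y * (e y - e x) * (u y - u x) := by
      rw [Finset.mul_sum]
      refine sum_congr rfl fun x _ => ?_
      rw [Finset.mul_sum]
      exact sum_congr rfl fun y _ => by ring
    rw [h1, green w hsym e u]
    have h2 : ∑ x, e x * ∑ y, w x y * (u x - u y) = ∑ y, w x₀ y * (u x₀ - u y) := by
      have h3 : ∀ x, e x * ∑ y, w x y * (u x - u y)
          = if x = x₀ then ∑ y, w x y * (u x - u y) else 0 := by
        intro x
        rw [he x]
        split <;> simp
      rw [sum_congr rfl fun x _ => h3 x, Finset.sum_ite_eq' univ x₀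
        (fun x => ∑ y, w x y * (u x - u y))]
      simp
    rw [h2]
    ring
  have hB2 : ∑ x, μ x * (Real.exp (u x) * e x) = μ x₀ * Real.exp (u x₀) := by
    have h3 : ∀ x, μ x * (Real.exp (u x) * e x)
        = if x = x₀ then μ x * Real.exp (u x) else 0 := by
      intro x
      rw [he x]
      split <;> simp
    rw [sum_congr rfl fun x _ => h3 x, Finset.sum_ite_eq' univ x₀
      (fun x => μ x * Real.exp (u x))]
    simp
  have hC2 : ∑ x, b x * e x = b x₀ := by
    have h3 : ∀ x, b x * e x = if x = x₀ then b x else 0 := by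
      intro x
      rw [he x]
      split <;> simp
    rw [sum_congr rfl fun x _ => h3 x, Finset.sum_ite_eq' univ x₀ b]
    simp
  rw [hgr, hB2, hC2] at hval
  have hmu := mu_lap w μ hμ u x₀
  have hflip : ∑ y, w x₀ y * (u x₀ - u y) = - ∑ y, w x₀ y * (u y - u x₀) := by
    rw [← Finset.sum_neg_distrib]
    exact sum_congr rfl fun y _ => by ring
  rw [hflip] at hval
  have hkey : μ x₀ * lap w μ u x₀ = μ x₀ * Real.exp (u x₀) - b x₀ := by
    rw [hmu]; linarith
  have hrhs : μ x₀ * (Real.exp (u x₀) - b x₀ / μ x₀) = μ x₀ * Real.exp (u x₀) - b x₀ := by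
    rw [mul_sub, mul_comm (μ x₀) (b x₀ / μ x₀), div_mul_cancel₀ _ (hμ x₀).ne']
  exact mul_left_cancel₀ (hμ x₀).ne' (by rw [hkey, hrhs])

theorem keythm [DecidableEq V] (w : V → V → ℝ) (μ b : V → ℝ)
    (hsym : ∀ x y, w x y = w y x) (hnn : ∀ x y, 0 ≤ w x y) (hμ : ∀ x, 0 < μ x)
    (hconn : (SimpleGraph.fromRel fun x y => 0 < w x y).Connected) :
    (∃! u : V → ℝ, ∀ x, lap w μ u x = Real.exp (u x) - b x / μ x) ↔ 0 < ∑ x, b x := by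
  have : Nonempty V := hconn.nonempty
  constructor
  · rintro ⟨u, hu, -⟩
    exact necessity w μ b hsym hμ u hu
  · intro hb
    obtain ⟨u, hmin⟩ := exists_min w μ b hsym hnn hμ hconn hb
    have hu := critical w μ b hsym hμ u hmin
    exact ⟨u, hu, fun v hv => uniqueness w μ b hsym hnn hμ v u hv hu⟩

end Aux

theorem bogomolnyi_main [Fintype V] [DecidableEq V]
    (w : V → V → ℝ) (μ : V → ℝ)
    (hsym : ∀ x y, w x y = w y x) (hnn : ∀ x y, 0 ≤ w x y)
    (hμ : ∀ x, 0 < μ x)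
    (hconn : (SimpleGraph.fromRel fun x y => 0 < w x y).Connected)
    (k : ℕ) (z : Fin k → V) (hz : Function.Injective z)
    (n : Fin k → ℕ) (hn : ∀ s, 0 < n s) (N : ℕ) (hN : N = ∑ s, n s) :
    (∃! u : V → ℝ, ∀ x, lap w μ u x =
      Real.exp (u x) - 1 + 4 * π * ∑ s, (n s : ℝ) * dirac μ (z s) x) ↔
    4 * π * (N : ℝ) < ∑ x, μ x := by
  have hne : Nonempty V := hconn.nonempty
  set f : V → ℝ := fun x => 4 * π * ∑ s, (n s : ℝ) * dirac μ (z s) x with hf_def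
  have hf : ∀ x, f x = 4 * π * ∑ s, (n s : ℝ) * dirac μ (z s) x := fun _ => rfl
  set b : V → ℝ := fun x => μ x * (1 - f x) with hb_def
  have hb : ∀ x, b x = μ x * (1 - f x) := fun _ => rfl
  have hbdiv : ∀ x, b x / μ x = 1 - f x := fun x => by
    rw [hb x, mul_div_cancel_left₀ _ (hμ x).ne']
  have hiff : ∀ u : V → ℝ,
      (∀ x, lap w μ u x = Real.exp (u x) - 1 + 4 * π * ∑ s, (n s : ℝ) * dirac μ (z s) x) ↔
      (∀ x, lap w μ u x = Real.exp (u x) - b x / μ x) := by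
    intro u
    refine forall_congr' fun x => ?_
    rw [hbdiv x, hf x]
    constructor <;> intro h <;> linarith [h]
  rw [existsUnique_congr hiff, keythm w μ b hsym hnn hμ hconn]
  have hdone : ∑ x, b x = ∑ x, μ x - 4 * π * N := by
    have h1 : ∑ x, b x = ∑ x, μ x - ∑ x, μ x * f x := by
      rw [← Finset.sum_sub_distrib]
      exact sum_congr rfl fun x _ => by rw [hb x]; ring
    have h3 : ∀ x, μ x * f x = ∑ s, 4 * π * ((n s : ℝ) * (μ x * dirac μ (z s) x)) := by
      intro x
      rw [hf x]
      rw [show (4:ℝ) * π * ∑ s, (n s : ℝ) * dirac μ (z s) x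
          = ∑ s, 4 * π * ((n s : ℝ) * dirac μ (z s) x) by rw [Finset.mul_sum]]
      rw [Finset.mul_sum]
      exact sum_congr rfl fun s _ => by ring
    have hdir : ∀ s : Fin k, ∑ x, 4 * π * ((n s : ℝ) * (μ x * dirac μ (z s) x))
        = 4 * π * (n s : ℝ) := by
      intro s
      have hsum1 : ∑ x, μ x * dirac μ (z s) x = 1 := by
        unfold dirac
        simp only [mul_ite, mul_zero]
        rw [Finset.sum_ite_eq' univ (z s) (fun x => μ x * (1 / μ (z s)))]
        simp [mul_one_div, div_self (hμ (z s)).ne', mul_inv_cancel₀ (hμ (z s)).ne']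
      calc ∑ x, 4 * π * ((n s : ℝ) * (μ x * dirac μ (z s) x))
          = 4 * π * ((n s : ℝ) * ∑ x, μ x * dirac μ (z s) x) := by
            rw [Finset.mul_sum, Finset.mul_sum]
        _ = 4 * π * (n s : ℝ) := by rw [hsum1, mul_one]
    have h2 : ∑ x, μ x * f x = 4 * π * (N : ℝ) := by
      rw [sum_congr rfl fun x _ => h3 x, Finset.sum_comm,
        sum_congr rfl fun s _ => hdir s, ← Finset.mul_sum, hN]
      push_cast
      ring
    rw [h1, h2]
  rw [hdone]
  constructor <;> intro h <;> linarith
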